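/- Let A be a locally finitely presented additive category and let β : Y → Z be a morphism in A that admits a kernel α : X → Y with X pure-injective. Then β is right determined by the class fp A of finitely presented objects: every morphism β' : Y' → Z such that Im Hom_A(C, β') ⊆ Im Hom_A(C, β) for all finitely presented C factors through β. -/

import Mathlib

open CategoryTheory Limits Opposite

universe v u

namespace Aux14

variable {A : Type u} [Category.{v} A] [Preadditive A] [HasBinaryBiproducts A]
variable {X Y : A} {α : X ⟶ Y}
variable {J : Type v} [SmallCategory J] {D : J ⥤ A}

variable (α D) in
/-- auxiliary diagram -/
@[simps, reducible]
noncomputable def E (δ : ∀ (j j' : J) (_ : j ⟶ j'), D.obj j ⟶ X)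
    (h : ∀ j, D.obj j ⟶ Y) (hm : Mono α)
    (hδ : ∀ {j j'} (f : j ⟶ j'), δ j j' f ≫ α = h j - D.map f ≫ h j') : J ⥤ A where
  obj j := X ⊞ D.obj j
  map {j j'} f := biprod.lift (biprod.fst + biprod.snd ≫ δ j j' f) (biprod.snd ≫ D.map f)
  map_id j := by
    have h0 : δ j j (𝟙 j) = 0 := by
      rw [← cancel_mono α]; simp [hδ (𝟙 j)]
    ext <;> simp [h0]
  map_comp {j j' j''} f g := by
    have hc : δ j j'' (f ≫ g) = δ j j' f + D.map f ≫ δ j' j'' g := by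
      rw [← cancel_mono α]
      simp only [Preadditive.add_comp, Category.assoc, hδ, Functor.map_comp,
        Preadditive.comp_sub]
      abel
    ext <;> simp [hc] <;> abel

variable (δ : ∀ (j j' : J) (_ : j ⟶ j'), D.obj j ⟶ X)
    (h : ∀ j, D.obj j ⟶ Y) (hm : Mono α)
    (hδ : ∀ {j j'} (f : j ⟶ j'), δ j j' f ≫ α = h j - D.map f ≫ h j')

theorem inl_E_map {j j' : J} (f : j ⟶ j') :
    (biprod.inl : X ⟶ X ⊞ D.obj j) ≫ (E α D δ h hm hδ).map f = biprod.inl := by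
  refine biprod.hom_ext _ _ ?_ ?_ <;> simp

theorem inr_E_map {j j' : J} (f : j ⟶ j') :
    (biprod.inr : D.obj j ⟶ X ⊞ D.obj j) ≫ (E α D δ h hm hδ).map f =
      δ j j' f ≫ biprod.inl + D.map f ≫ biprod.inr := by
  refine biprod.hom_ext _ _ ?_ ?_ <;> simp

theorem E_map_snd {j j' : J} (f : j ⟶ j') :
    (E α D δ h hm hδ).map f ≫ (biprod.snd : X ⊞ D.obj j' ⟶ D.obj j') =
      biprod.snd ≫ D.map f := by
  simp

theorem E_map_desc {j j' : J} (f : j ⟶ j') :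
    (E α D δ h hm hδ).map f ≫ biprod.desc α (h j') = biprod.desc α (h j) := by
  refine biprod.hom_ext' _ _ ?_ ?_ <;> simp [hδ f] <;> abel

theorem comp_E_map {j j' : J} (f : j ⟶ j') {C : A} (v : C ⟶ X ⊞ D.obj j)
    (hv : v ≫ biprod.snd ≫ D.map f = 0) :
    v ≫ (E α D δ h hm hδ).map f =
      (v ≫ (biprod.fst + biprod.snd ≫ δ j j' f)) ≫ biprod.inl := by
  refine biprod.hom_ext _ _ ?_ ?_ <;>
    simp [← Category.assoc, Category.assoc, hv]

end Aux14

section Stmt14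

variable {A : Type u} [Category.{v} A]

/-- An object `X` is finitely presented if `Hom_A(X, −)` preserves filtered colimits. -/
def IsFP (X : A) : Prop :=
  ∀ (J : Type v) [SmallCategory J] [IsFiltered J],
    Nonempty (PreservesColimitsOfShape J (coyoneda.obj (op X)))

/-- A presentation of `X` as a filtered colimit of finitely presented objects. -/
structure FilteredFpPresentation (X : A) where
  J : Type v
  [cat : SmallCategory J]
  [filt : IsFiltered J]
  D : J ⥤ A
  c : Cocone D
  fp : ∀ j : J, IsFP (D.obj j)
  isColimit : IsColimit c
  pt_eq : c.pt = X

/-- `A` is locally finitely presented: it has filtered colimits, the finitely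
presented objects form an essentially small full subcategory, and every object is a
filtered colimit of finitely presented objects. -/
def LocallyFinitelyPresented (A : Type u) [Category.{v} A] : Prop :=
  (∀ (J : Type v) [SmallCategory J] [IsFiltered J], HasColimitsOfShape J A) ∧
    EssentiallySmall.{v} (ObjectProperty.FullSubcategory (fun X : A => IsFP X)) ∧
    (∀ X : A, Nonempty (FilteredFpPresentation X))

variable [Preadditive A]

/-- A composable pair `f : X ⟶ Y`, `g : Y ⟶ Z` is a pure-exact sequence
`0 → X → Y → Z → 0` if `Hom_A(C, −)` carries it to a short exact sequence of abelian
groups for every finitely presented `C`. -/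
def IsPureExact {X Y Z : A} (f : X ⟶ Y) (g : Y ⟶ Z) : Prop :=
  ∀ C : A, IsFP C →
    (∀ h : C ⟶ X, h ≫ f = 0 → h = 0) ∧
    (∀ h : C ⟶ Y, h ≫ g = 0 → ∃ k : C ⟶ X, k ≫ f = h) ∧
    (∀ h : C ⟶ Z, ∃ k : C ⟶ Y, k ≫ g = h)

/-- An object `X` is pure-injective if every pure-exact sequence `0 → X → Y → Z → 0`
splits. -/
def IsPureInjective (X : A) : Prop :=
  ∀ ⦃Y Z : A⦄ (f : X ⟶ Y) (g : Y ⟶ Z), IsPureExact f g → ∃ r : Y ⟶ X, f ≫ r = 𝟙 X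

/-- In a locally finitely presented additive category, a morphism `β : Y ⟶ Z` with a
pure-injective kernel is right determined by the finitely presented objects: every
`β' : Y' ⟶ Z` with `Im Hom_A(C, β') ⊆ Im Hom_A(C, β)` for all finitely presented `C`
factors through `β`. -/
theorem rightDetermined_of_pureInjective_kernel
    [HasFiniteBiproducts A]
    (hA : LocallyFinitelyPresented A)
    {X Y Z : A} (β : Y ⟶ Z) (α : X ⟶ Y)
    -- `α` is a kernel of `β`
    (hker : α ≫ β = 0 ∧ ∀ (W : A) (γ : W ⟶ Y), γ ≫ β = 0 → ∃! δ : W ⟶ X, δ ≫ α = γ)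
    -- `X` is pure-injective
    (hpi : IsPureInjective X) :
    ∀ (Y' : A) (β' : Y' ⟶ Z),
      (∀ C : A, IsFP C → ∀ g : C ⟶ Y', ∃ h : C ⟶ Y, h ≫ β = g ≫ β') →
      ∃ φ : Y' ⟶ Y, φ ≫ β = β' := by
  obtain ⟨hαβ, huniv⟩ := hker
  obtain ⟨hcolim, -, hpres⟩ := hA
  have hmono : Mono α := by
    constructor
    intro W u v huv
    exact (huniv W (v ≫ α) (by rw [Category.assoc, hαβ, comp_zero])).unique huv rfl
  intro Y' β' hfac
  obtain ⟨pres⟩ := hpres Y'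
  obtain ⟨J, D, c, fp, isColim, rfl⟩ := pres
  haveI : HasColimitsOfShape J A := hcolim J
  haveI : HasBinaryBiproducts A := hasBinaryBiproducts_of_finite_biproducts A
  choose h hh using fun j => hfac _ (fp j) (c.ι.app j)
  have hβ0 : ∀ {j j' : J} (f : j ⟶ j'), (h j - D.map f ≫ h j') ≫ β = 0 := by
    intro j j' f
    rw [Preadditive.sub_comp, Category.assoc, hh, hh, ← c.w f, Category.assoc, sub_self]
  choose δ hδ0 using fun (j j' : J) (f : j ⟶ j') => (huniv _ _ (hβ0 f)).exists
  have hδ : ∀ {j j' : J} (f : j ⟶ j'), δ j j' f ≫ α = h j - D.map f ≫ h j' :=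
    fun f => hδ0 _ _ f
  set E := Aux14.E α D δ h hmono hδ with hE
  have hinl : ∀ {j j' : J} (f : j ⟶ j'),
      (biprod.inl : X ⟶ E.obj j) ≫ E.map f = biprod.inl :=
    fun f => Aux14.inl_E_map δ h hmono hδ f
  have hinr : ∀ {j j' : J} (f : j ⟶ j'),
      (biprod.inr : D.obj j ⟶ E.obj j) ≫ E.map f
        = δ _ _ f ≫ biprod.inl + D.map f ≫ biprod.inr :=
    fun f => Aux14.inr_E_map δ h hmono hδ f
  -- the canonical inclusion of X
  obtain ⟨j₀⟩ : Nonempty J := IsFiltered.nonempty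
  set ιX : X ⟶ colimit E := (biprod.inl : X ⟶ E.obj j₀) ≫ colimit.ι E j₀ with hιXdef
  have hιX : ∀ j, (biprod.inl : X ⟶ E.obj j) ≫ colimit.ι E j = ιX := by
    intro j
    have e1 : (biprod.inl : X ⟶ E.obj j) ≫ colimit.ι E j
        = biprod.inl ≫ colimit.ι E (IsFiltered.max j j₀) := by
      rw [← colimit.w E (IsFiltered.leftToMax j j₀), ← Category.assoc,
        hinl (IsFiltered.leftToMax j j₀)]
    have e2 : (biprod.inl : X ⟶ E.obj j₀) ≫ colimit.ι E j₀
        = biprod.inl ≫ colimit.ι E (IsFiltered.max j j₀) := by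
      rw [← colimit.w E (IsFiltered.rightToMax j j₀), ← Category.assoc,
        hinl (IsFiltered.rightToMax j j₀)]
    rw [e1, hιXdef, e2]
  -- projection to Y
  set πY : colimit E ⟶ Y := colimit.desc E
    ⟨Y, { app := fun j => biprod.desc α (h j),
          naturality := by
            intro j j' f
            simp only [Functor.const_obj_obj, Functor.const_obj_map, Category.comp_id]
            exact Aux14.E_map_desc δ h hmono hδ f }⟩ with hπYdef
  have hπY : ∀ j, colimit.ι E j ≫ πY = biprod.desc α (h j) := by
    intro j; simp [hπYdef]
  -- projection to Y' = c.pt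
  set p' : colimit E ⟶ c.pt := colimit.desc E
    ⟨c.pt, { app := fun j => biprod.snd ≫ c.ι.app j,
             naturality := by
               intro j j' f
               simp only [Functor.const_obj_obj, Functor.const_obj_map, Category.comp_id]
               rw [← Category.assoc, Aux14.E_map_snd δ h hmono hδ f, Category.assoc,
                 c.w f] }⟩ with hp'def
  have hp' : ∀ j, colimit.ι E j ≫ p' = biprod.snd ≫ c.ι.app j := by
    intro j; simp [hp'def]
  have hιXα : ιX ≫ πY = α := by
    rw [hιXdef, Category.assoc, hπY]; simp
  -- pure exactness
  have hpe : IsPureExact ιX p' := by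
    intro C hC
    obtain ⟨pc⟩ := hC J
    haveI := pc
    have hcE : IsColimit ((coyoneda.obj (op C)).mapCocone (colimit.cocone E)) :=
      isColimitOfPreserves _ (colimit.isColimit E)
    have hcD : IsColimit ((coyoneda.obj (op C)).mapCocone c) :=
      isColimitOfPreserves _ isColim
    refine ⟨?_, ?_, ?_⟩
    · intro u hu
      have h1 : u ≫ α = 0 := by rw [← hιXα, ← Category.assoc, hu, zero_comp]
      rw [← cancel_mono α, h1, zero_comp]
    · intro u hu
      obtain ⟨j, v, hv⟩ := Types.jointly_surjective _ hcE u
      have hv' : v ≫ colimit.ι E j = u := hv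
      have h0 : ((coyoneda.obj (op C)).mapCocone c).ι.app j (v ≫ biprod.snd)
          = ((coyoneda.obj (op C)).mapCocone c).ι.app j (0 : C ⟶ D.obj j) := by
        show (v ≫ biprod.snd) ≫ c.ι.app j = (0 : C ⟶ D.obj j) ≫ c.ι.app j
        rw [zero_comp, Category.assoc, ← hp' j, ← Category.assoc, hv', hu]
      obtain ⟨k, f, g, hfg⟩ :=
        (Types.FilteredColimit.isColimit_eq_iff _ hcD).mp h0
      have hfg' : v ≫ biprod.snd ≫ D.map f = 0 := by
        have h2 : (v ≫ biprod.snd) ≫ D.map f = (0 : C ⟶ D.obj j) ≫ D.map g := hfg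
        rw [Category.assoc] at h2
        rw [h2, zero_comp]
      refine ⟨v ≫ (biprod.fst + biprod.snd ≫ δ j k f), ?_⟩
      have key : v ≫ E.map f = (v ≫ (biprod.fst + biprod.snd ≫ δ j k f)) ≫ biprod.inl :=
        Aux14.comp_E_map δ h hmono hδ f v hfg'
      rw [← hιX k, ← Category.assoc, ← key, Category.assoc, colimit.w, hv']
    · intro g
      obtain ⟨j, u, hu⟩ := Types.jointly_surjective _ hcD g
      have hu' : u ≫ c.ι.app j = g := hu
      refine ⟨u ≫ biprod.inr ≫ colimit.ι E j, ?_⟩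
      rw [Category.assoc, Category.assoc, hp' j, ← Category.assoc biprod.inr, biprod.inr_snd,
        Category.id_comp, hu']
  obtain ⟨r, hr⟩ := hpi ιX p' hpe
  -- the factoring cocone
  have key : ∀ {j j' : J} (f : j ⟶ j'),
      D.map f ≫ biprod.inr ≫ colimit.ι E j' ≫ r
        = biprod.inr ≫ colimit.ι E j ≫ r - δ j j' f := by
    intro j j' f
    have e1 : (biprod.inr : D.obj j ⟶ E.obj j) ≫ colimit.ι E j
        = δ j j' f ≫ ιX + D.map f ≫ biprod.inr ≫ colimit.ι E j' := by
      rw [← colimit.w E f, ← Category.assoc, hinr f, Preadditive.add_comp,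
        Category.assoc, Category.assoc, hιX j']
    have e2 := congrArg (fun t => t ≫ r) e1
    simp only [Category.assoc, Preadditive.add_comp] at e2
    rw [hr, Category.comp_id] at e2
    rw [e2]; abel
  set φc : Cocone D := ⟨Y,
    { app := fun j => h j - (biprod.inr ≫ colimit.ι E j ≫ r) ≫ α,
      naturality := by
        intro j j' f
        simp only [Functor.const_obj_obj, Functor.const_obj_map, Category.comp_id]
        rw [Preadditive.comp_sub, ← Category.assoc (D.map f), key f,
          Preadditive.sub_comp, hδ f]
        abel }⟩ with hφcdef
  refine ⟨isColim.desc φc, ?_⟩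
  apply isColim.hom_ext
  intro j
  rw [← Category.assoc, isColim.fac φc j]
  show (h j - (biprod.inr ≫ colimit.ι E j ≫ r) ≫ α) ≫ β = c.ι.app j ≫ β'
  rw [Preadditive.sub_comp, hh j, Category.assoc, hαβ, comp_zero, sub_zero]


end Stmt14
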